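/- Let 𝕋 = ℝ/ℤ be the circle group and let ℋ be the family of all subgroups of 𝕋^ℕ that are controllable in 𝕋^ℕ but not uniformly controllable in 𝕋^ℕ. Then ℋ has cardinality 2^𝔠, where 𝔠 is the cardinality of the continuum. -/

import Mathlib

/-- Projection of an element of the direct product `ℕ → M` to the coordinates
in `J`. -/
def proj {M : Type*} (J : Set ℕ) (g : ℕ → M) : J → M :=
  fun j => g j

/-- A subgroup `H` of the direct product `G = M^ℕ` is *controllable* in `G` if
`p_J(H) = p_J(H ∩ ⊕_{n ∈ ℕ} M)` for every finite `J ⊆ ℕ`. -/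
def Controllable {M : Type*} [AddCommGroup M] (H : AddSubgroup (ℕ → M)) : Prop :=
  ∀ J : Set ℕ, J.Finite →
    proj J '' (H : Set (ℕ → M)) =
      proj J '' ((H : Set (ℕ → M)) ∩ {g | {n | g n ≠ 0}.Finite})

/-- A subgroup `H` of the direct product `G = M^ℕ` is *uniformly controllable*
in `G` if for every finite `J ⊆ ℕ` there is a finite `K ⊆ ℕ` with
`p_J(H) = p_J(H ∩ ⊕_{n ∈ K} M)`. -/
def UniformlyControllable {M : Type*} [AddCommGroup M]
    (H : AddSubgroup (ℕ → M)) : Prop :=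
  ∀ J : Set ℕ, J.Finite → ∃ K : Set ℕ, K.Finite ∧
    proj J '' (H : Set (ℕ → M)) =
      proj J '' ((H : Set (ℕ → M)) ∩ {g | ∀ n ∉ K, g n = 0})


open Cardinal Set

noncomputable section UC

local notation "𝕋" => AddCircle (1 : ℝ)

/-- the "weight" of a finitely supported integer vector. -/
def dval (c : ℕ →₀ ℤ) : ℝ := c.sum fun n k => (k : ℝ) / 2 ^ (n + 1)

lemma dval_zero : dval 0 = 0 := Finsupp.sum_zero_index

lemma dval_add (c c' : ℕ →₀ ℤ) : dval (c + c') = dval c + dval c' :=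
  Finsupp.sum_add_index' (fun n => by simp) (fun n k1 k2 => by push_cast; ring)

lemma dval_neg (c : ℕ →₀ ℤ) : dval (-c) = -dval c := by
  have h := dval_add c (-c); simp only [add_neg_cancel, dval_zero] at h; linarith

/-- The main construction. -/
def Hset (A : AddSubgroup 𝕋) : AddSubgroup (ℕ → 𝕋) where
  carrier := {g | g 1 ∈ A ∧ ∃ c : ℕ →₀ ℤ,
    (∀ n, g (n + 2) = c n • ((Real.sqrt 2 : ℝ) : 𝕋)) ∧ g 0 = ((dval c : ℝ) : 𝕋)}
  zero_mem' := ⟨A.zero_mem, 0, by simp, by simp [dval_zero]⟩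
  add_mem' := by
    rintro g g' ⟨h1, c, hc, h0⟩ ⟨h1', c', hc', h0'⟩
    refine ⟨A.add_mem h1 h1', c + c', fun n => ?_, ?_⟩
    · simp [hc n, hc' n, add_zsmul]
    · simp [h0, h0', dval_add, AddCircle.coe_add]
  neg_mem' := by
    rintro g ⟨h1, c, hc, h0⟩
    refine ⟨A.neg_mem h1, -c, fun n => ?_, ?_⟩
    · simp [hc n, neg_zsmul]
    · simp [h0, dval_neg, AddCircle.coe_neg]

lemma mem_Hset {A : AddSubgroup 𝕋} {g : ℕ → 𝕋} :
    g ∈ Hset A ↔ g 1 ∈ A ∧ ∃ c : ℕ →₀ ℤ,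
      (∀ n, g (n + 2) = c n • ((Real.sqrt 2 : ℝ) : 𝕋)) ∧ g 0 = ((dval c : ℝ) : 𝕋) :=
  Iff.rfl

lemma Hset_finite_support {A : AddSubgroup 𝕋} {g : ℕ → 𝕋} (hg : g ∈ Hset A) :
    {n | g n ≠ 0}.Finite := by
  obtain ⟨h1, c, hc, h0⟩ := hg
  apply Set.Finite.subset (Set.Finite.union ((Set.finite_singleton 1).insert 0)
    (Set.Finite.image (fun n => n + 2) c.support.finite_toSet))
  intro n hn
  match n with
  | 0 => exact Or.inl (by simp)
  | 1 => exact Or.inl (by simp)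
  | (m + 2) =>
    refine Or.inr ⟨m, ?_, rfl⟩
    simp only [Finset.coe_sort_coe, Finset.mem_coe, Finsupp.mem_support_iff]
    intro hcm
    exact hn (by rw [hc m, hcm, zero_zsmul])

lemma controllable_Hset (A : AddSubgroup 𝕋) : Controllable (Hset A) := by
  intro J hJ
  rw [Set.inter_eq_left.mpr]
  intro g hg
  exact Hset_finite_support hg

lemma zsmul_sqrt2_eq_zero {k : ℤ} (h : k • ((Real.sqrt 2 : ℝ) : 𝕋) = 0) : k = 0 := by
  by_contra hk
  rw [← AddCircle.coe_zsmul, AddCircle.coe_eq_zero_iff] at h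
  obtain ⟨n, hn⟩ := h
  apply irrational_sqrt_two
  refine ⟨(n : ℚ) / (k : ℚ), ?_⟩
  have hk' : (k : ℝ) ≠ 0 := Int.cast_ne_zero.mpr hk
  push_cast
  rw [div_eq_iff hk']
  simp only [zsmul_eq_mul, mul_one] at hn
  linarith [hn]

lemma dval_div (c : ℕ →₀ ℤ) (m : ℕ) (h : ∀ n ∈ c.support, n + 1 ≤ m) :
    ∃ j : ℤ, dval c = (j : ℝ) / 2 ^ m := by
  refine ⟨c.sum fun n k => k * 2 ^ (m - (n + 1)), ?_⟩
  rw [dval, Finsupp.sum, Finsupp.sum, Int.cast_sum, Finset.sum_div]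
  refine Finset.sum_congr rfl fun n hn => ?_
  have hnm := h n hn
  have h2 : (2 : ℝ) ^ (m - (n + 1)) * 2 ^ (n + 1) = 2 ^ m := pow_sub_mul_pow 2 hnm
  push_cast
  rw [div_eq_div_iff (by positivity) (by positivity), mul_assoc, h2]

lemma dval_single (m : ℕ) : dval (Finsupp.single m 1) = 1 / 2 ^ (m + 1) := by
  rw [dval, Finsupp.sum_single_index] <;> simp

lemma not_uc_Hset (A : AddSubgroup 𝕋) : ¬ UniformlyControllable (Hset A) := by
  intro h
  obtain ⟨K, hK, heq⟩ := h {0} (Set.finite_singleton 0)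
  obtain ⟨m, hm⟩ := hK.bddAbove
  simp only [mem_upperBounds] at hm
  -- the generator with c = single m 1
  set gstar : ℕ → 𝕋 := fun n =>
    if n = 0 then ((1 / 2 ^ (m + 1) : ℝ) : 𝕋) else
      if n = m + 2 then ((Real.sqrt 2 : ℝ) : 𝕋) else 0 with hgstar
  have hgs : gstar ∈ Hset A := by
    refine ⟨by simp [hgstar, A.zero_mem], Finsupp.single m 1, fun n => ?_,
      by rw [show gstar 0 = ((1 / 2 ^ (m + 1) : ℝ) : 𝕋) by simp [hgstar], dval_single]⟩
    rcases eq_or_ne n m with rfl | hne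
    · simp [hgstar]
    · simp [hgstar, Finsupp.single_apply_eq_zero.mpr fun hh => absurd hh hne, hne]
  have hmem : proj {0} gstar ∈ proj {0} '' ((Hset A : Set (ℕ → 𝕋)) ∩ {g | ∀ n ∉ K, g n = 0}) := by
    rw [← heq]; exact ⟨gstar, hgs, rfl⟩
  obtain ⟨g, ⟨hgH, hgK⟩, hproj⟩ := hmem
  have hg0 : g 0 = gstar 0 := congrFun hproj ⟨0, rfl⟩
  obtain ⟨hg1, c, hc, h0⟩ := hgH
  have hsupp : ∀ n ∈ c.support, n + 1 ≤ m := by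
    intro n hn
    rw [Finsupp.mem_support_iff] at hn
    by_contra hle
    have hnK : n + 2 ∉ K := fun hmem' => by have := hm _ hmem'; omega
    have := hgK _ hnK
    rw [hc n] at this
    exact hn (zsmul_sqrt2_eq_zero this)
  obtain ⟨j, hj⟩ := dval_div c m hsupp
  rw [h0, hj] at hg0
  have hgs0 : gstar 0 = ((1 / 2 ^ (m + 1) : ℝ) : 𝕋) := by simp [hgstar]
  rw [hgs0] at hg0
  have hsub : ((j : ℝ) / 2 ^ m) - 1 / 2 ^ (m + 1) ∈ AddSubgroup.zmultiples (1 : ℝ) :=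
    (QuotientAddGroup.eq_iff_sub_mem.mp hg0)
  obtain ⟨z, hz⟩ := hsub
  simp only [zsmul_eq_mul, mul_one] at hz
  have key : ((2 * j - 2 * (2 ^ m * z) : ℤ) : ℝ) = ((1 : ℤ) : ℝ) := by
    have h2m : (2 : ℝ) ^ m ≠ 0 := by positivity
    have hz' : (2 : ℝ) ^ m * z = j - 1 / 2 := by
      rw [hz, pow_succ]
      field_simp
    push_cast
    linarith [hz']
  have key' : 2 * j - 2 * (2 ^ m * z) = 1 := Int.cast_injective key
  omega

lemma e1_mem_Hset_iff {A : AddSubgroup 𝕋} {a : 𝕋} :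
    (fun n => if n = 1 then a else 0) ∈ Hset A ↔ a ∈ A := by
  constructor
  · intro h
    simpa using h.1
  · intro ha
    refine ⟨by simpa using ha, 0, fun n => by simp, by simp [dval_zero]⟩

lemma Hset_injective : Function.Injective Hset := by
  intro A B h
  ext a
  rw [← e1_mem_Hset_iff (A := A), ← e1_mem_Hset_iff (A := B), h]

/-- key independence lemma -/
lemma notmem_closure_image {E s : Set ℝ}
    (hE : LinearIndependent ℚ ((↑) : E → ℝ)) (h1E : (1 : ℝ) ∈ E)
    (hsE : s ⊆ E) {b : ℝ} (hb : b ∈ E) (hbs : b ∉ s) (hb1 : b ≠ 1) :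
    ((b : ℝ) : 𝕋) ∉ AddSubgroup.closure ((fun r : ℝ => ((r : ℝ) : 𝕋)) '' s) := by
  intro hmem
  have hcoe : (fun r : ℝ => ((r : ℝ) : 𝕋)) =
      (QuotientAddGroup.mk' (AddSubgroup.zmultiples (1 : ℝ))) := rfl
  rw [hcoe, ← AddMonoidHom.map_closure] at hmem
  obtain ⟨x, hx, hxe⟩ := hmem
  have hxb : b - x ∈ AddSubgroup.zmultiples (1 : ℝ) := by
    rw [QuotientAddGroup.mk'_apply] at hxe
    exact (QuotientAddGroup.eq_iff_sub_mem.mp hxe.symm)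
  obtain ⟨z, hz⟩ := hxb
  have hxspan : x ∈ Submodule.span ℚ (insert 1 s) := by
    have hle : AddSubgroup.closure s ≤
        (Submodule.span ℚ (insert 1 s)).toAddSubgroup :=
      AddSubgroup.closure_le _ |>.mpr fun y hy =>
        Submodule.subset_span (Set.mem_insert_of_mem _ hy)
    exact hle hx
  have hbspan : b ∈ Submodule.span ℚ (insert 1 s) := by
    have h1' : (1 : ℝ) ∈ Submodule.span ℚ (insert 1 s) :=
      Submodule.subset_span (Set.mem_insert _ _)
    have : b = x + z • (1 : ℝ) := by
      have hz' : z • (1 : ℝ) = b - x := hz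
      rw [hz']; ring
    rw [this]
    exact add_mem hxspan (zsmul_mem h1' z)
  -- contradiction with linear independence
  have hsub : insert 1 s ⊆ E := Set.insert_subset h1E hsE
  have himg : ((↑) : E → ℝ) '' {y : E | (y : ℝ) ∈ insert 1 s} = insert 1 s := by
    rw [show {y : E | (y : ℝ) ∈ insert 1 s} = ((↑) : E → ℝ) ⁻¹' (insert 1 s) from rfl,
      Subtype.image_preimage_coe]
    exact Set.inter_eq_right.mpr hsub
  have hnot := hE.notMem_span_image (s := {y : E | (y : ℝ) ∈ insert 1 s}) (x := ⟨b, hb⟩)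
    (by simp only [Set.mem_setOf_eq]; intro hmem'; rcases hmem' with h | h
        · exact hb1 h
        · exact hbs h)
  rw [himg] at hnot
  exact hnot hbspan

lemma mk_T : #𝕋 = Cardinal.continuum := by
  haveI : Fact ((0 : ℝ) < 1) := ⟨one_pos⟩
  rw [Cardinal.mk_congr (α := 𝕋) (AddCircle.equivIco (1 : ℝ) 0),
    Cardinal.mk_Ico_real (by norm_num)]

lemma mk_pi_T : #(ℕ → 𝕋) = Cardinal.continuum := by
  rw [← Cardinal.power_def, mk_T, Cardinal.mk_nat, Cardinal.continuum_power_aleph0]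

theorem card_controllable_not_uniformlyControllable_circle :
    Cardinal.mk {H : AddSubgroup (ℕ → AddCircle (1 : ℝ)) |
        Controllable H ∧ ¬ UniformlyControllable H} =
      2 ^ Cardinal.continuum := by
  apply le_antisymm
  · calc
      #{H : AddSubgroup (ℕ → 𝕋) | Controllable H ∧ ¬ UniformlyControllable H}
          ≤ #(AddSubgroup (ℕ → 𝕋)) := Cardinal.mk_subtype_le _
      _ ≤ #(Set (ℕ → 𝕋)) := Cardinal.mk_le_of_injective SetLike.coe_injective
      _ = 2 ^ #(ℕ → 𝕋) := Cardinal.mk_set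
      _ = 2 ^ Cardinal.continuum := by rw [mk_pi_T]
  · -- lower bound
    have h1 : LinearIndepOn ℚ id ({(1 : ℝ)} : Set ℝ) :=
      (linearIndepOn_singleton_iff ℚ).mpr one_ne_zero
    set E : Set ℝ := h1.extend (Set.subset_univ _) with hEdef
    have hE : LinearIndependent ℚ ((↑) : E → ℝ) := h1.linearIndepOn_extend _
    have h1E : (1 : ℝ) ∈ E := h1.subset_extend _ rfl
    have hEcard : #E = Cardinal.continuum := by
      have h := (Module.Basis.extend h1).mk_eq_rank''
      rw [h, Real.rank_rat_real]
    set B : Set ℝ := E \ {(1 : ℝ)} with hBdef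
    have hBcard : #B = Cardinal.continuum := by
      have hsub : ({(1 : ℝ)} : Set ℝ) ⊆ E := Set.singleton_subset_iff.mpr h1E
      have h := Cardinal.mk_diff_add_mk hsub
      rw [Cardinal.mk_singleton, hEcard] at h
      rcases le_or_gt Cardinal.aleph0 #B with hb | hb
      · rw [← h, Cardinal.add_one_eq hb]
      · exfalso
        have : #↥B + 1 < Cardinal.aleph0 :=
          Cardinal.add_lt_aleph0 hb Cardinal.one_lt_aleph0
        rw [h] at this
        exact absurd this (not_lt.mpr Cardinal.aleph0_le_continuum)
    -- the injection
    set A : Set ↥B → AddSubgroup 𝕋 := fun T =>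
      AddSubgroup.closure ((fun r : ℝ => ((r : ℝ) : 𝕋)) '' ((↑) '' T)) with hAdef
    have hAmono : ∀ T T' : Set ↥B, A T = A T' → T ⊆ T' := by
      intro T T' hA x hx
      by_contra hx'
      have hxB : (x : ℝ) ∈ B := x.2
      have hxE : (x : ℝ) ∈ E := hxB.1
      have hx1 : (x : ℝ) ≠ 1 := by
        intro h; exact hxB.2 (by simp [h])
      have hT'E : ((↑) '' T' : Set ℝ) ⊆ E := by
        rintro y ⟨w, hw, rfl⟩; exact w.2.1
      have hnot := notmem_closure_image hE h1E hT'E hxE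
        (by rintro ⟨w, hw, he⟩; exact hx' (Subtype.coe_injective he ▸ hw)) hx1
      have hmemT : ((x : ℝ) : 𝕋) ∈ A T :=
        AddSubgroup.subset_closure (Set.mem_image_of_mem _ (Set.mem_image_of_mem _ hx))
      rw [hA] at hmemT
      exact hnot hmemT
    have hAinj : Function.Injective A := fun T T' h =>
      Set.Subset.antisymm (hAmono _ _ h) (hAmono _ _ h.symm)
    set F : Set ↥B → {H : AddSubgroup (ℕ → 𝕋) |
        Controllable H ∧ ¬ UniformlyControllable H} := fun T =>
      ⟨Hset (A T), controllable_Hset _, not_uc_Hset _⟩ with hFdef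
    have hFinj : Function.Injective F := by
      intro T T' h
      apply hAinj
      apply Hset_injective
      exact congrArg Subtype.val h
    calc
      (2 : Cardinal) ^ Cardinal.continuum = 2 ^ #↥B := by rw [hBcard]
      _ = #(Set ↥B) := Cardinal.mk_set.symm
      _ ≤ _ := Cardinal.mk_le_of_injective hFinj

end UC
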